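/- Let α, β : J → J be additive maps satisfying α(xy) = xα(y), β(yx) = β(y)x, and α(y)z + yβ(z) = 0 for all x ∈ K, y, z ∈ J. Then the map Γ : R → R sending a matrix [a_{i,j}] to Σ_{i=1}^{n} α(a_{i,n})e_{i,1} + Σ_{j=1}^{n} β(a_{1,j})e_{n,j} (so that ye_{1,n} ↦ α(y)e_{1,1} + β(y)e_{n,n}, ye_{i,n} ↦ α(y)e_{i,1} for 1 < i ≤ n, ye_{1,j} ↦ β(y)e_{n,j} for 1 ≤ j < n, and all other entries map to 0) is a derivation of R (not merely a Lie derivation). -/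

import Mathlib

lemma sumCol_apply {K : Type*} [Ring K] {n : ℕ} (f : Fin n → K) (c a b : Fin n) :
    (∑ i : Fin n, Matrix.single i c (f i)) a b = if c = b then f a else 0 := by
  simp [Matrix.sum_apply, Matrix.single, ite_and, Finset.sum_ite_eq']

lemma sumRow_apply {K : Type*} [Ring K] {n : ℕ} (g : Fin n → K) (r a b : Fin n) :
    (∑ j : Fin n, Matrix.single r j (g j)) a b = if r = a then g b else 0 := by
  simp [Matrix.sum_apply, Matrix.single, ite_and, Finset.sum_ite_eq]


lemma aux_pp {K : Type*} [Ring K] (X Y c1 c2 : K) (h : c1 + c2 = 0) :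
    X + Y = c1 + Y + (X + c2) := by
  rw [show c1 + Y + (X + c2) = X + Y + (c1 + c2) by abel, h, add_zero]

lemma aux_pn {K : Type*} [Ring K] (X c1 c2 : K) (h : c1 + c2 = 0) :
    X = c1 + (X + c2) := by
  rw [show c1 + (X + c2) = X + (c1 + c2) by abel, h, add_zero]

lemma aux_np {K : Type*} [Ring K] (Y c1 c2 : K) (h : c1 + c2 = 0) :
    Y = c1 + Y + c2 := by
  rw [show c1 + Y + c2 = Y + (c1 + c2) by abel, h, add_zero]



/-- Membership in `R = R_n(K,J)`: entries on and above the main diagonal lie in `J`. -/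
def Rmem {K : Type*} [Ring K] {n : ℕ} (J : AddSubgroup K)
    (M : Matrix (Fin n) (Fin n) K) : Prop :=
  ∀ i j : Fin n, i ≤ j → M i j ∈ J

/-- The almost annihilator map
`[a_{i,j}] ↦ Σ_i α(a_{i,n}) e_{i,1} + Σ_j β(a_{1,j}) e_{n,j}` is a (full, not merely Lie)
derivation of `R`, given `α, β : J → J` additive with `α(xy) = xα(y)`, `β(yx) = β(y)x`,
and `α(y)z + yβ(z) = 0`. -/
theorem almost_annihilator_derivation {K : Type*} [Ring K] {n : ℕ} (hn : 3 ≤ n)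
    (h2 : ∀ a : K, a + a = 0 → a = 0)
    (J : AddSubgroup K)
    (hJl : ∀ r : K, ∀ y ∈ J, r * y ∈ J) (hJr : ∀ r : K, ∀ y ∈ J, y * r ∈ J)
    (α β : K →+ K)
    (hαJ : ∀ y ∈ J, α y ∈ J) (hβJ : ∀ y ∈ J, β y ∈ J)
    (hα : ∀ x : K, ∀ y ∈ J, α (x * y) = x * α y)
    (hβ : ∀ x : K, ∀ y ∈ J, β (y * x) = β y * x)
    (hαβ : ∀ y ∈ J, ∀ z ∈ J, α y * z + y * β z = 0) :
    (∀ A : Matrix (Fin n) (Fin n) K, Rmem J A →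
        Rmem J ((∑ i : Fin n, Matrix.single i ⟨0, by omega⟩ (α (A i ⟨n - 1, by omega⟩))) +
          ∑ j : Fin n, Matrix.single ⟨n - 1, by omega⟩ j (β (A ⟨0, by omega⟩ j)))) ∧
    (∀ A B : Matrix (Fin n) (Fin n) K, Rmem J A → Rmem J B →
        ((∑ i : Fin n, Matrix.single i ⟨0, by omega⟩ (α ((A + B) i ⟨n - 1, by omega⟩))) +
          ∑ j : Fin n, Matrix.single ⟨n - 1, by omega⟩ j (β ((A + B) ⟨0, by omega⟩ j))) =
        ((∑ i : Fin n, Matrix.single i ⟨0, by omega⟩ (α (A i ⟨n - 1, by omega⟩))) +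
          ∑ j : Fin n, Matrix.single ⟨n - 1, by omega⟩ j (β (A ⟨0, by omega⟩ j))) +
        ((∑ i : Fin n, Matrix.single i ⟨0, by omega⟩ (α (B i ⟨n - 1, by omega⟩))) +
          ∑ j : Fin n, Matrix.single ⟨n - 1, by omega⟩ j (β (B ⟨0, by omega⟩ j)))) ∧
    (∀ A B : Matrix (Fin n) (Fin n) K, Rmem J A → Rmem J B →
        ((∑ i : Fin n, Matrix.single i ⟨0, by omega⟩ (α ((A * B) i ⟨n - 1, by omega⟩))) +
          ∑ j : Fin n, Matrix.single ⟨n - 1, by omega⟩ j (β ((A * B) ⟨0, by omega⟩ j))) =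
        ((∑ i : Fin n, Matrix.single i ⟨0, by omega⟩ (α (A i ⟨n - 1, by omega⟩))) +
          ∑ j : Fin n, Matrix.single ⟨n - 1, by omega⟩ j (β (A ⟨0, by omega⟩ j))) * B +
        A * ((∑ i : Fin n, Matrix.single i ⟨0, by omega⟩ (α (B i ⟨n - 1, by omega⟩))) +
          ∑ j : Fin n, Matrix.single ⟨n - 1, by omega⟩ j (β (B ⟨0, by omega⟩ j)))) := by
  have hle : ∀ i : Fin n, i ≤ (⟨n - 1, by omega⟩ : Fin n) := by
    intro i; rw [Fin.le_def]; have := i.isLt; simp; omega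
  have h0le : ∀ j : Fin n, (⟨0, by omega⟩ : Fin n) ≤ j := by
    intro j; rw [Fin.le_def]; simp
  refine ⟨?_, ?_, ?_⟩
  · intro A hA i j hij
    rw [Matrix.add_apply, sumCol_apply, sumRow_apply]
    split_ifs with h1 h3
    · exfalso
      rw [← h1, ← h3, Fin.le_def] at hij
      simp at hij; omega
    · simpa using hαJ _ (hA i _ (hle i))
    · simpa using hβJ _ (hA _ j (h0le j))
    · simpa using J.zero_mem
  · intro A B hA hB
    ext a b
    simp only [Matrix.add_apply, sumCol_apply, sumRow_apply, map_add]
    split_ifs <;> abel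
  · intro A B hA hB
    ext a b
    have key1 : ∀ a : Fin n, α ((A * B) a ⟨n - 1, by omega⟩)
        = ∑ k, A a k * α (B k ⟨n - 1, by omega⟩) := by
      intro a
      rw [Matrix.mul_apply, map_sum]
      exact Finset.sum_congr rfl fun k _ => hα _ _ (hB k _ (hle k))
    have key2 : ∀ b : Fin n, β ((A * B) ⟨0, by omega⟩ b)
        = ∑ k, β (A ⟨0, by omega⟩ k) * B k b := by
      intro b
      rw [Matrix.mul_apply, map_sum]
      exact Finset.sum_congr rfl fun k _ => hβ _ _ (hA _ k (h0le k))
    have key3 : ∀ a b : Fin n, α (A a ⟨n - 1, by omega⟩) * B ⟨0, by omega⟩ b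
        + A a ⟨n - 1, by omega⟩ * β (B ⟨0, by omega⟩ b) = 0 :=
      fun a b => hαβ _ (hA a _ (hle a)) _ (hB _ b (h0le b))
    simp only [Matrix.add_apply, sumCol_apply, sumRow_apply]
    rcases eq_or_ne (⟨0, by omega⟩ : Fin n) b with hb | hb <;>
      rcases eq_or_ne (⟨n - 1, by omega⟩ : Fin n) a with ha | ha
    · rw [if_pos hb, if_pos ha, key1, key2]
      subst hb; subst ha
      simp only [Matrix.mul_apply, Matrix.add_apply, sumCol_apply, sumRow_apply, if_pos rfl,
        ite_mul, mul_ite, zero_mul, mul_zero, add_mul, mul_add, Finset.sum_add_distrib,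
        Finset.sum_ite_eq, Finset.mem_univ, if_true, Finset.sum_const_zero, add_zero, zero_add]
      exact aux_pp _ _ _ _ (key3 _ _)
    · rw [if_pos hb, if_neg ha, key1, add_zero]
      subst hb
      simp only [Matrix.mul_apply, Matrix.add_apply, sumCol_apply, sumRow_apply, if_pos rfl,
        if_neg ha, ite_mul, mul_ite, zero_mul, mul_zero, add_mul, mul_add,
        Finset.sum_add_distrib, Finset.sum_ite_eq, Finset.mem_univ, if_true,
        Finset.sum_const_zero, add_zero, zero_add]
      exact aux_pn _ _ _ (key3 _ _)
    · rw [if_neg hb, if_pos ha, key2, zero_add]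
      subst ha
      simp only [Matrix.mul_apply, Matrix.add_apply, sumCol_apply, sumRow_apply, if_pos rfl,
        if_neg hb, ite_mul, mul_ite, zero_mul, mul_zero, add_mul, mul_add,
        Finset.sum_add_distrib, Finset.sum_ite_eq, Finset.mem_univ, if_true,
        Finset.sum_const_zero, add_zero, zero_add]
      exact aux_np _ _ _ (key3 _ _)
    · rw [if_neg hb, if_neg ha, add_zero]
      simp only [Matrix.mul_apply, Matrix.add_apply, sumCol_apply, sumRow_apply, if_neg hb,
        if_neg ha, ite_mul, mul_ite, zero_mul, mul_zero, add_mul, mul_add,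
        Finset.sum_add_distrib, Finset.sum_ite_eq, Finset.mem_univ, if_true,
        Finset.sum_const_zero, add_zero, zero_add]
      exact (key3 a b).symm
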